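/- arXiv:1010.4755 — 5 statements merged into one kernel-verified Lean document; each statement's English description precedes it below -/
import Mathlib

section
/- Under the geometric setup, the set 𝒰 = ∪_{j=1}^4 conv^{Λ_W}{B_δ(A₀), T_j(B_δ(A₀))} ∖ 𝒦 is an open subset of ℝ^{2n+1}. -/
open MeasureTheory Real Filter Topology

noncomputable section

/-- Euclidean space `ℝⁿ`. -/
abbrev E (n : ℕ) := EuclideanSpace ℝ (Fin n)

/-- Build a vector of `ℝⁿ` from coordinates. -/
def toE {n : ℕ} (f : Fin n → ℝ) : E n := WithLp.toLp 2 f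

/-- The fundamental cube `[0,2π)ⁿ` of the torus `𝕋ⁿ = ℝⁿ/(2πℤ)ⁿ`. -/
def cube (n : ℕ) : Set (E n) := {x | ∀ i, x i ∈ Set.Ico (0:ℝ) (2*π)}

/-- The lattice vector `2πk`, `k ∈ ℤⁿ`. -/
def lat {n : ℕ} (k : Fin n → ℤ) : E n := toE fun i => 2*π*(k i)

/-- An integer frequency `k ∈ ℤⁿ` viewed as a vector of `ℝⁿ`. -/
def intVec {n : ℕ} (k : Fin n → ℤ) : E n := toE fun i => (k i : ℝ)

/-- A function on `ℝⁿ` which is `2πℤⁿ`-periodic, i.e. a function on the torus. -/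
def SpacePeriodic {n : ℕ} {α : Type*} (f : E n → α) : Prop :=
  ∀ (x : E n) (k : Fin n → ℤ), f (x + lat k) = f x

/-- The `k`-th Fourier coefficient of a function on the torus `𝕋ⁿ`. -/
def fcoeff {n : ℕ} (f : E n → ℝ) (k : Fin n → ℤ) : ℂ :=
  ((2*π)^n : ℝ)⁻¹ • ∫ x in cube n,
    Complex.exp (-Complex.I * (∑ i, (k i : ℂ) * (x i : ℂ))) * (f x)

/-- `ξ ∈ S^{n-1}` is a regular point of the symbol `m` if `m` is `C¹` near `ξ` and the
restriction of `m` to the sphere is an immersion near `ξ` (its differential is injective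
on the tangent space of the sphere). -/
def RegularPt {n : ℕ} (m : E n → E n) (ξ : E n) : Prop :=
  ξ ∈ Metric.sphere (0 : E n) 1 ∧
  ∃ U : Set (E n), IsOpen U ∧ ξ ∈ U ∧ ContDiffOn ℝ 1 m U ∧
    ∀ η ∈ U ∩ Metric.sphere (0 : E n) 1, ∀ v : E n,
      inner ℝ η v = (0:ℝ) → fderiv ℝ m η v = 0 → v = 0

/-- `u = T[θ]` for the Fourier multiplier `T` with symbol `m`:
`û(k) = m(k) θ̂(k)` for all `k ∈ ℤⁿ ∖ {0}`. -/
def IsMultiplier {n : ℕ} (m : E n → E n) (θ : E n → ℝ) (u : E n → E n) : Prop :=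
  ∀ k : Fin n → ℤ, k ≠ 0 → ∀ i : Fin n,
    fcoeff (fun x => u x i) k = (m (intVec k) i : ℂ) * fcoeff θ k

/-- `div u = 0` on the torus, in the sense of distributions. -/
def DivFree {n : ℕ} (u : E n → E n) : Prop :=
  ∀ ψ : E n → ℝ, ContDiff ℝ (⊤:ℕ∞) ψ → SpacePeriodic ψ →
    ∫ x in cube n, fderiv ℝ ψ x (u x) = 0

/-- A test function on `ℝ × 𝕋ⁿ`: smooth, `2πℤⁿ`-periodic in space,
compactly supported in time. -/
def IsTest {n : ℕ} (φ : ℝ × E n → ℝ) : Prop :=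
  ContDiff ℝ (⊤:ℕ∞) φ ∧ (∀ (t : ℝ) (x : E n) (k : Fin n → ℤ), φ (t, x + lat k) = φ (t, x)) ∧
  ∃ R : ℝ, ∀ (t : ℝ) (x : E n), R ≤ |t| → φ (t, x) = 0

/-- The weak form of the transport equation `∂ₜθ + u·∇θ = 0` on `ℝ × 𝕋ⁿ`:
`∫∫ θ (∂ₜφ + u·∇φ) = 0` for all test functions `φ`. -/
def WeakTransport {n : ℕ} (θ : ℝ → E n → ℝ) (u : ℝ → E n → E n) : Prop :=
  ∀ φ : ℝ × E n → ℝ, IsTest φ →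
    (∫ t : ℝ, ∫ x in cube n,
      θ t x * (fderiv ℝ φ (t, x) (1, 0) + fderiv ℝ φ (t, x) (0, u t x))) = 0

/-- Weak solution of the active scalar system `∂ₜθ + u·∇θ = 0`, `div u = 0`, `u = T[θ]`,
with zero spatial means. -/
def IsWeakSolution {n : ℕ} (m : E n → E n) (θ : ℝ → E n → ℝ) (u : ℝ → E n → E n) : Prop :=
  (∀ t, SpacePeriodic (θ t)) ∧ (∀ t, SpacePeriodic (u t)) ∧
  AEStronglyMeasurable (fun p : ℝ × E n => θ p.1 p.2) volume ∧
  AEStronglyMeasurable (fun p : ℝ × E n => u p.1 p.2) volume ∧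
  WeakTransport θ u ∧
  (∀ᵐ t : ℝ, DivFree (u t)) ∧
  (∀ᵐ t : ℝ, IsMultiplier m (θ t) (u t)) ∧
  (∀ t : ℝ, (∫ x in cube n, θ t x) = 0 ∧ (∫ x in cube n, u t x) = (0 : E n))

/-- The constraint set `K = {(θ, θu, u) : θ ∈ ℝ, u ∈ ℝⁿ}`. -/
def Kset (n : ℕ) : Set (ℝ × E n × E n) := {p | p.2.1 = p.1 • p.2.2}

/-- The restricted wave cone `Λ_W = {(θ, q, θ m(ξ)) : θ ≠ 0, ξ ∈ W, q ∈ ℝⁿ}`. -/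
def LamW {n : ℕ} (m : E n → E n) (W : Set (E n)) : Set (ℝ × E n × E n) :=
  {p | p.1 ≠ 0 ∧ ∃ ξ ∈ W, p.2.2 = p.1 • m ξ}

/-- `W` is a relatively open subset of the sphere `S^{n-1}` on which `m` restricted to
the sphere is a `C¹` immersion. -/
def ImmersionOn {n : ℕ} (m : E n → E n) (W : Set (E n)) : Prop :=
  ∃ U : Set (E n), IsOpen U ∧ W = U ∩ Metric.sphere (0:E n) 1 ∧ ContDiffOn ℝ 1 m U ∧
    ∀ η ∈ W, ∀ v : E n, inner ℝ η v = (0:ℝ) → fderiv ℝ m η v = 0 → v = 0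

/-- The `Λ`-convex hull of a pair of sets:
`conv^Λ{E₁,E₂} = {λA₁ + (1-λ)A₂ : λ ∈ [0,1], Aᵢ ∈ Eᵢ, A₁ - A₂ ∈ Λ}`. -/
def convLam {n : ℕ} (Λ E₁ E₂ : Set (ℝ × E n × E n)) : Set (ℝ × E n × E n) :=
  {a | ∃ l ∈ Set.Icc (0:ℝ) 1, ∃ A₁ ∈ E₁, ∃ A₂ ∈ E₂,
    A₁ - A₂ ∈ Λ ∧ a = l • A₁ + (1 - l) • A₂}

/-- The ball `B_δ(A₀)` around the state `A₀ = (0, q₀, 0)`. -/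
def stateBall {n : ℕ} (q₀ : E n) (δ : ℝ) : Set (ℝ × E n × E n) :=
  Metric.ball ((0:ℝ), q₀, (0:E n)) δ

/-- The four points `T₁ = (1,x₁,x₁)`, `T₂ = (1,x₂,x₂)`, `T₃ = (-1,-y₁,y₁)`,
`T₄ = (-1,-y₂,y₂)` of the constraint set `K`. -/
def T4pt {n : ℕ} (x₁ x₂ y₁ y₂ : E n) : Fin 4 → ℝ × E n × E n :=
  ![((1:ℝ), x₁, x₁), ((1:ℝ), x₂, x₂), ((-1:ℝ), -y₁, y₁), ((-1:ℝ), -y₂, y₂)]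

/-- The four maps `A ↦ T_j(A)` built from `x₁, x₂, y₁, y₂ : B_δ(A₀) → ℝⁿ`. -/
def T4fun {n : ℕ} (x₁ x₂ y₁ y₂ : ℝ × E n × E n → E n) (j : Fin 4)
    (A : ℝ × E n × E n) : ℝ × E n × E n :=
  T4pt (x₁ A) (x₂ A) (y₁ A) (y₂ A) j

/-- The conclusion of the `T4`-configuration lemma (Lemma 3.1): every
`A ∈ B_δ(A₀)` is a convex combination, with coefficients `l A j ∈ (0,1)`, of the four
points `T_j(A) ∈ K`, with `T_j(A) - A ∈ Λ_W`, and the maps `x₁, x₂, y₁, y₂` are open. -/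
def T4Setup {n : ℕ} (m : E n → E n) (W : Set (E n)) (q₀ : E n) (δ : ℝ)
    (x₁ x₂ y₁ y₂ : ℝ × E n × E n → E n) (l : ℝ × E n × E n → Fin 4 → ℝ) : Prop :=
  (∀ A ∈ stateBall q₀ δ,
    (∀ j, l A j ∈ Set.Ioo (0:ℝ) 1) ∧ (∑ j, l A j) = 1 ∧
    A = ∑ j, l A j • T4fun x₁ x₂ y₁ y₂ j A ∧
    ∀ j, T4fun x₁ x₂ y₁ y₂ j A ∈ Kset n ∧ T4fun x₁ x₂ y₁ y₂ j A - A ∈ LamW m W) ∧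
  (∀ O : Set (ℝ × E n × E n), O ⊆ stateBall q₀ δ → IsOpen O →
    IsOpen (x₁ '' O) ∧ IsOpen (x₂ '' O) ∧ IsOpen (y₁ '' O) ∧ IsOpen (y₂ '' O))

/-- The target set `𝒦 = ∪_j T_j(B_δ(A₀)) ⊂ K`. -/
def Kcal {n : ℕ} (q₀ : E n) (δ : ℝ) (x₁ x₂ y₁ y₂ : ℝ × E n × E n → E n) :
    Set (ℝ × E n × E n) :=
  ⋃ j : Fin 4, T4fun x₁ x₂ y₁ y₂ j '' stateBall q₀ δ

/-- The relaxed set `𝒰 = ∪_j conv^{Λ_W}{B_δ(A₀), T_j(B_δ(A₀))} ∖ 𝒦`. -/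
def Ucal {n : ℕ} (m : E n → E n) (W : Set (E n)) (q₀ : E n) (δ : ℝ)
    (x₁ x₂ y₁ y₂ : ℝ × E n × E n → E n) : Set (ℝ × E n × E n) :=
  (⋃ j : Fin 4, convLam (LamW m W) (stateBall q₀ δ)
      (T4fun x₁ x₂ y₁ y₂ j '' stateBall q₀ δ)) \ Kcal q₀ δ x₁ x₂ y₁ y₂

lemma fst_mem_Kcal {n : ℕ} {q₀ : E n} {δ : ℝ} {x₁ x₂ y₁ y₂ : ℝ × E n × E n → E n}
    {b : ℝ × E n × E n} (hb : b ∈ Kcal q₀ δ x₁ x₂ y₁ y₂) : |b.1| = 1 := by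
  simp only [Kcal, Set.mem_iUnion, Set.mem_image] at hb
  obtain ⟨j, A, -, rfl⟩ := hb
  fin_cases j <;> simp [T4fun, T4pt]

lemma T4_struct {n : ℕ} (x₁ x₂ y₁ y₂ : ℝ × E n × E n → E n) (q₀ : E n) (δ : ℝ)
    (hopen4 : IsOpen (x₁ '' stateBall q₀ δ) ∧ IsOpen (x₂ '' stateBall q₀ δ) ∧
      IsOpen (y₁ '' stateBall q₀ δ) ∧ IsOpen (y₂ '' stateBall q₀ δ)) (j : Fin 4) :
    ∃ (ε : ℝ) (h : ℝ × E n × E n → E n), (ε = 1 ∨ ε = -1) ∧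
      IsOpen (h '' stateBall q₀ δ) ∧
      ∀ A, T4fun x₁ x₂ y₁ y₂ j A = (ε, ε • h A, h A) := by
  fin_cases j
  · exact ⟨1, x₁, Or.inl rfl, hopen4.1, fun A => by simp [T4fun, T4pt]⟩
  · exact ⟨1, x₂, Or.inl rfl, hopen4.2.1, fun A => by simp [T4fun, T4pt]⟩
  · exact ⟨-1, y₁, Or.inr rfl, hopen4.2.2.1, fun A => by simp [T4fun, T4pt, neg_one_smul]⟩
  · exact ⟨-1, y₂, Or.inr rfl, hopen4.2.2.2, fun A => by simp [T4fun, T4pt, neg_one_smul]⟩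

lemma abs_fst_lt_one_of_ball {n : ℕ} {m : E n → E n} {W : Set (E n)} {q₀ : E n} {δ : ℝ}
    {x₁ x₂ y₁ y₂ : ℝ × E n × E n → E n} {l : ℝ × E n × E n → Fin 4 → ℝ}
    (hsetup : T4Setup m W q₀ δ x₁ x₂ y₁ y₂ l) {A : ℝ × E n × E n}
    (hA : A ∈ stateBall q₀ δ) : |A.1| < 1 := by
  obtain ⟨hio, hsum, hrep, -⟩ := hsetup.1 A hA
  have e0 : (T4fun x₁ x₂ y₁ y₂ 0 A).1 = 1 := by simp [T4fun, T4pt]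
  have e1 : (T4fun x₁ x₂ y₁ y₂ 1 A).1 = 1 := by simp [T4fun, T4pt]
  have e2 : (T4fun x₁ x₂ y₁ y₂ 2 A).1 = -1 := by simp [T4fun, T4pt]
  have e3 : (T4fun x₁ x₂ y₁ y₂ 3 A).1 = -1 := by simp [T4fun, T4pt]
  have h1 : A.1 = ∑ j, l A j * (T4fun x₁ x₂ y₁ y₂ j A).1 := by
    conv_lhs => rw [hrep]
    rw [Prod.fst_sum]
    simp [Prod.smul_fst, smul_eq_mul]
  rw [Fin.sum_univ_four] at h1
  rw [e0, e1, e2, e3] at h1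
  have hs : l A 0 + l A 1 + l A 2 + l A 3 = 1 := by
    have := hsum; rw [Fin.sum_univ_four] at this; linarith
  have h00 := hio 0; have h11 := hio 1; have h22 := hio 2; have h33 := hio 3
  rw [abs_lt]
  constructor <;> [nlinarith [h00.1, h11.1, h22.1, h33.1]; nlinarith [h00.1, h11.1, h22.1, h33.1]]

set_option maxHeartbeats 1000000 in
/-- Lemma 3.2. Under the geometric setup (the conclusion of the
`T4`-configuration lemma), the set
`𝒰 = ∪_{j=1}^4 conv^{Λ_W}{B_δ(A₀), T_j(B_δ(A₀))} ∖ 𝒦` is open in `ℝ^{2n+1}`. -/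
theorem Ucal_isOpen (n : ℕ) (hn : 2 ≤ n) (m : E n → E n)
    (heven : ∀ ξ : E n, ξ ≠ 0 → m (-ξ) = m ξ)
    (hhom : ∀ (r : ℝ), 0 < r → ∀ ξ : E n, ξ ≠ 0 → m (r • ξ) = m ξ)
    (ξ₁ ξ₂ : E n) (W₁ W₂ : Set (E n)) (q₀ : E n) (δ : ℝ) (hδ : 0 < δ)
    (hreg₁ : RegularPt m ξ₁) (hreg₂ : RegularPt m ξ₂)
    (hξ₁ : ξ₁ ∈ W₁) (hξ₂ : ξ₂ ∈ W₂)
    (hW₁ : ImmersionOn m W₁) (hW₂ : ImmersionOn m W₂)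
    (x₁ x₂ y₁ y₂ : ℝ × E n × E n → E n) (l : ℝ × E n × E n → Fin 4 → ℝ)
    (hsetup : T4Setup m (W₁ ∪ W₂) q₀ δ x₁ x₂ y₁ y₂ l) :
    IsOpen (Ucal m (W₁ ∪ W₂) q₀ δ x₁ x₂ y₁ y₂) := by
  rw [isOpen_iff_forall_mem_open]
  rintro a ⟨ha, haK⟩
  simp only [Set.mem_iUnion] at ha
  obtain ⟨j, l0, hl01, A₁, hA₁, A₂, hA₂, heΛ, hrepa⟩ := ha
  obtain ⟨A, hA, rfl⟩ := hA₂
  obtain ⟨ε, g, hε, hOopen, hT⟩ := T4_struct x₁ x₂ y₁ y₂ q₀ δ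
    (hsetup.2 (stateBall q₀ δ) subset_rfl Metric.isOpen_ball) j
  set x₀ : E n := g A with hx₀
  rw [hT A] at heΛ hrepa
  obtain ⟨hτ, ξ, hξW, hμ⟩ := heΛ
  simp only [Prod.fst_sub, Prod.snd_sub] at hτ hμ
  -- hτ : A₁.1 - ε ≠ 0, hμ : A₁.2.2 - x₀ = (A₁.1 - ε) • m ξ
  -- positivity of l0
  have hl0 : 0 < l0 := by
    rcases eq_or_lt_of_le hl01.1 with h | h
    · exfalso
      apply haK
      have h2 : a = T4fun x₁ x₂ y₁ y₂ j A := by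
        rw [hrepa, hT A, ← h]; simp
      rw [h2]
      exact Set.mem_iUnion.2 ⟨j, Set.mem_image_of_mem _ hA⟩
    · exact h
  -- component identities for a
  have ha1 : a.1 = l0 * A₁.1 + (1 - l0) * ε := by
    rw [hrepa]; simp [Prod.smul_fst, smul_eq_mul]
  have ha21 : a.2.1 = l0 • A₁.2.1 + (1 - l0) • (ε • x₀) := by
    rw [hrepa]; rfl
  have ha22 : a.2.2 = l0 • A₁.2.2 + (1 - l0) • x₀ := by
    rw [hrepa]; rfl
  have haε : a.1 - ε = l0 * (A₁.1 - ε) := by rw [ha1]; ring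
  have haεne : a.1 ≠ ε := by
    intro h
    have : l0 * (A₁.1 - ε) = 0 := by rw [← haε, h, sub_self]
    exact hτ ((mul_eq_zero.1 this).resolve_left hl0.ne')
  have hA122 : A₁.2.2 = x₀ + (A₁.1 - ε) • m ξ := by rw [← hμ]; abel
  have ha22' : a.2.2 = x₀ + (a.1 - ε) • m ξ := by
    rw [ha22, hA122, haε, mul_smul]
    match_scalars <;> ring
  have habs : |a.1| < 1 := by
    have hA1abs : |A₁.1| < 1 := abs_fst_lt_one_of_ball hsetup hA₁
    rw [abs_lt] at hA1abs ⊢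
    rcases hε with h | h <;> rw [ha1, h] <;> constructor <;>
      nlinarith [hA1abs.1, hA1abs.2, hl01.2]
  -- the local re-parametrization
  set X : ℝ × E n × E n → E n := fun b => b.2.2 - (b.1 - ε) • m ξ with hXdef
  set F : ℝ × E n × E n → ℝ × E n × E n := fun b =>
    (ε + (b.1 - ε) / l0, ε • X b + l0⁻¹ • (b.2.1 - ε • X b),
      X b + ((b.1 - ε) / l0) • m ξ) with hFdef
  have hXcont : Continuous X := by
    rw [hXdef]
    exact continuous_snd.snd.sub ((continuous_fst.sub continuous_const).smul continuous_const)
  have hFcont : Continuous F := by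
    rw [hFdef]
    refine Continuous.prodMk ?_ (Continuous.prodMk ?_ ?_)
    · exact continuous_const.add ((continuous_fst.sub continuous_const).div_const l0)
    · exact (hXcont.const_smul ε).add
        ((continuous_snd.fst.sub (hXcont.const_smul ε)).const_smul l0⁻¹)
    · exact hXcont.add (((continuous_fst.sub continuous_const).div_const l0).smul
        continuous_const)
  set O : Set (E n) := g '' stateBall q₀ δ with hOdef
  refine ⟨{b : ℝ × E n × E n | |b.1| < 1} ∩ {b | b.1 ≠ ε} ∩ X ⁻¹' O ∩
    F ⁻¹' (stateBall q₀ δ), ?_, ?_, ?_⟩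
  · -- subset of Ucal
    rintro b ⟨⟨⟨hb1, hb2⟩, hbX⟩, hbF⟩
    have hτ' : (b.1 - ε) / l0 ≠ 0 := div_ne_zero (sub_ne_zero.2 hb2) hl0.ne'
    constructor
    · -- in the union of convLam's
      refine Set.mem_iUnion.2 ⟨j, l0, hl01, F b, hbF, (ε, ε • X b, X b), ?_, ?_, ?_⟩
      · obtain ⟨A'', hA'', hgA''⟩ := hbX
        exact ⟨A'', hA'', by rw [hT A'', hgA'']⟩
      · refine ⟨?_, ξ, hξW, ?_⟩
        · simpa [hFdef] using hτ'
        · simp only [hFdef, hXdef, Prod.fst_sub, Prod.snd_sub]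
          match_scalars <;> ring
      · refine Prod.ext_iff.2 ⟨?_, Prod.ext_iff.2 ⟨?_, ?_⟩⟩
        · show b.1 = l0 * (ε + (b.1 - ε) / l0) + (1 - l0) * ε
          field_simp
          ring
        · show b.2.1 = l0 • (ε • X b + l0⁻¹ • (b.2.1 - ε • X b)) + (1 - l0) • (ε • X b)
          match_scalars <;> field_simp <;> ring
        · show b.2.2 = l0 • (X b + ((b.1 - ε) / l0) • m ξ) + (1 - l0) • X b
          simp only [hXdef]
          match_scalars <;> field_simp <;> ring
    · -- not in Kcal
      intro hk
      have := fst_mem_Kcal hk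
      simp only [Set.mem_setOf_eq] at hb1
      linarith [this ▸ hb1]
  · -- openness
    refine IsOpen.inter (IsOpen.inter (IsOpen.inter ?_ ?_) ?_) ?_
    · exact isOpen_lt (continuous_fst.abs) continuous_const
    · exact isOpen_compl_singleton.preimage continuous_fst
    · exact hOopen.preimage hXcont
    · exact Metric.isOpen_ball.preimage hFcont
  · -- a is a member
    have hXa : X a = x₀ := by
      simp only [hXdef]
      rw [ha22']; abel
    have hdiv : (a.1 - ε) / l0 = A₁.1 - ε := by
      rw [haε, mul_div_cancel_left₀ _ hl0.ne']
    refine ⟨⟨⟨habs, haεne⟩, ?_⟩, ?_⟩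
    · show X a ∈ O
      rw [hXa]
      exact Set.mem_image_of_mem _ hA
    · show F a ∈ stateBall q₀ δ
      have hFa : F a = A₁ := by
        refine Prod.ext_iff.2 ⟨?_, Prod.ext_iff.2 ⟨?_, ?_⟩⟩
        · show ε + (a.1 - ε) / l0 = A₁.1
          rw [hdiv]; ring
        · show ε • X a + l0⁻¹ • (a.2.1 - ε • X a) = A₁.2.1
          rw [hXa, ha21]
          match_scalars <;> field_simp <;> ring
        · show X a + ((a.1 - ε) / l0) • m ξ = A₁.2.2
          rw [hXa, hdiv, hA122]
      rw [hFa]; exact hA₁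
end
end

section
/- Let n ≥ 2, θ₀ ∈ ℝ, and ξ = (κ₁, …, κₙ) ∈ ℝⁿ. Let M be the n×n matrix whose first column is (−θ₀κ₁, −θ₀κ₂, …, −θ₀κₙ)ᵀ and whose j-th column, for 2 ≤ j ≤ n, is −κ_j e₁ + κ₁ e_j (i.e. first entry −κ_j, j-th entry κ₁, all other entries 0). Then det M = −θ₀ κ₁^{n−2} |ξ|². In particular, det M ≠ 0 whenever θ₀ ≠ 0, κ₁ ≠ 0 and ξ ≠ 0. -/
lemma aux_det (θ₀ : ℝ) : ∀ (m : ℕ) (κ : Fin (m+2) → ℝ),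
    (Matrix.of fun i j : Fin (m + 2) =>
      if j = 0 then -θ₀ * κ i
      else if i = 0 then -(κ j)
      else if i = j then κ 0
      else 0).det = -θ₀ * (κ 0) ^ m * (∑ i, (κ i) ^ 2) := by
  intro m
  induction m with
  | zero =>
    intro κ
    rw [Matrix.det_fin_two]
    simp [Fin.sum_univ_two]
    ring
  | succ m ih =>
    intro κ
    set A : Matrix (Fin (m+3)) (Fin (m+3)) ℝ := Matrix.of fun i j : Fin (m + 3) =>
      if j = 0 then -θ₀ * κ i
      else if i = 0 then -(κ j)
      else if i = j then κ 0
      else 0 with hA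
    have hlast0 : (Fin.last (m+2) : Fin (m+3)) ≠ 0 := by
      simp [Fin.ext_iff]
    rw [Matrix.det_succ_row A (Fin.last (m+2))]
    rw [Fin.sum_univ_succ]
    rw [Finset.sum_eq_single (Fin.last (m+1))]
    · -- main computation
      -- the minor at column 0
      have hBdet : (A.submatrix (Fin.last (m+2)).succAbove (0 : Fin (m+3)).succAbove).det
          = (-1:ℝ)^(m+1) * (-(κ (Fin.last (m+2)))) * (κ 0)^(m+1) := by
        set B := A.submatrix (Fin.last (m+2)).succAbove (0 : Fin (m+3)).succAbove with hB
        have hBentry : ∀ i j : Fin (m+2), B i j = A i.castSucc j.succ := by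
          intro i j
          rw [hB, Matrix.submatrix_apply, Fin.succAbove_last, Fin.succAbove_zero]
        rw [Matrix.det_succ_column B (Fin.last (m+1))]
        rw [Finset.sum_eq_single 0]
        · have h0 : B 0 (Fin.last (m+1)) = -(κ (Fin.last (m+2))) := by
            rw [hBentry, hA]
            simp only [Matrix.of_apply]
            rw [if_neg (by simp [Fin.ext_iff]), if_pos (by simp [Fin.ext_iff]),
              Fin.succ_last]
          have hC : B.submatrix (0 : Fin (m+2)).succAbove (Fin.last (m+1)).succAbove
              = Matrix.diagonal (fun _ : Fin (m+1) => κ 0) := by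
            ext a b
            rw [Matrix.submatrix_apply, Fin.succAbove_zero, Fin.succAbove_last,
              hBentry, hA]
            simp only [Matrix.of_apply, Matrix.diagonal]
            rw [if_neg (by simp), if_neg (by simp)]
            by_cases hab : a = b
            · subst hab
              simp [Fin.ext_iff]
            · rw [if_neg (by simp [Fin.ext_iff] at hab ⊢; omega),
                if_neg (by simp [Fin.ext_iff] at hab ⊢; omega)]
          rw [h0, hC, Matrix.det_diagonal, Finset.prod_const]
          simp only [Fin.val_zero, Fin.val_last, zero_add, Finset.card_univ,
            Fintype.card_fin]
        · intro i _ hi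
          have : B i (Fin.last (m+1)) = 0 := by
            rw [hBentry, hA]
            simp only [Matrix.of_apply, Fin.succ_last]
            rw [if_neg (by simp [Fin.ext_iff]),
              if_neg (by simpa using hi),
              if_neg (by simp [Fin.ext_iff]; omega)]
          rw [this]; ring
        · simp
      -- the minor at the last column
      have hDdet : (A.submatrix (Fin.last (m+2)).succAbove
            ((Fin.last (m+1)).succ).succAbove).det
          = -θ₀ * (κ 0)^m * (∑ i : Fin (m+2), (κ i.castSucc)^2) := by
        have hD : A.submatrix (Fin.last (m+2)).succAbove ((Fin.last (m+1)).succ).succAbove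
            = Matrix.of fun i j : Fin (m+2) =>
              if j = 0 then -θ₀ * (κ ∘ Fin.castSucc) i
              else if i = 0 then -((κ ∘ Fin.castSucc) j)
              else if i = j then (κ ∘ Fin.castSucc) 0
              else 0 := by
          ext i j
          rw [Matrix.submatrix_apply, Fin.succ_last, Fin.succAbove_last, hA]
          simp only [Matrix.of_apply, Function.comp_apply]
          have e0 : ∀ k : Fin (m+2), (k.castSucc = (0 : Fin (m+3))) ↔ k = 0 := by
            intro k; simp
          have eij : (i.castSucc = j.castSucc) ↔ i = j := by simp [Fin.ext_iff]
          have ec : (Fin.castSucc (0 : Fin (m+2)) : Fin (m+3)) = 0 := by simp [Fin.ext_iff]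
          by_cases hj : j = 0
          · rw [if_pos ((e0 j).mpr hj), if_pos hj]
          · rw [if_neg (fun h => hj ((e0 j).mp h)), if_neg hj]
            by_cases hi : i = 0
            · rw [if_pos ((e0 i).mpr hi), if_pos hi]
            · rw [if_neg (fun h => hi ((e0 i).mp h)), if_neg hi]
              by_cases hij : i = j
              · rw [if_pos (hij ▸ rfl), if_pos hij, ec]
              · rw [if_neg (fun h => hij (eij.mp h)), if_neg hij]
        rw [hD, ih (κ ∘ Fin.castSucc)]
        simp [Function.comp]
      -- entries of the last row
      have hA0 : A (Fin.last (m+2)) 0 = -θ₀ * κ (Fin.last (m+2)) := by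
        rw [hA]; simp
      have hAl : A (Fin.last (m+2)) ((Fin.last (m+1)).succ) = κ 0 := by
        rw [hA, Fin.succ_last]
        simp [hlast0]
      rw [hBdet, hDdet, hA0, hAl]
      simp only [Fin.val_last, Fin.val_zero, Fin.val_succ, add_zero]
      have hsum : (∑ i : Fin (m+3), (κ i)^2)
          = (∑ i : Fin (m+2), (κ i.castSucc)^2) + (κ (Fin.last (m+2)))^2 :=
        Fin.sum_univ_castSucc _
      rw [hsum]
      have hs1 : ((-1:ℝ))^(m+2) * ((-1:ℝ))^(m+1) = -1 := by
        rw [← pow_add]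
        exact Odd.neg_one_pow ⟨m+1, by ring⟩
      have hs2 : ((-1:ℝ))^(m+2+(m+2)) = 1 := by
        rw [← two_mul]
        exact Even.neg_one_pow ⟨m+2, by ring⟩
      calc ((-1:ℝ))^(m+2) * (-θ₀ * κ (Fin.last (m+2))) *
            ((-1:ℝ)^(m+1) * (-(κ (Fin.last (m+2)))) * (κ 0)^(m+1))
          + ((-1:ℝ))^(m+2+(m+1+1)) * (κ 0) *
            (-θ₀ * (κ 0)^m * (∑ i : Fin (m+2), (κ i.castSucc)^2))
          = (((-1:ℝ))^(m+2) * ((-1:ℝ))^(m+1)) * ((-θ₀ * κ (Fin.last (m+2))) *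
            ((-(κ (Fin.last (m+2)))) * (κ 0)^(m+1)))
          + ((-1:ℝ))^(m+2+(m+2)) * ((κ 0) *
            (-θ₀ * (κ 0)^m * (∑ i : Fin (m+2), (κ i.castSucc)^2))) := by ring_nf
        _ = -θ₀ * (κ 0)^(m+1) *
            ((∑ i : Fin (m+2), (κ i.castSucc)^2) + (κ (Fin.last (m+2)))^2) := by
            rw [hs1, hs2]; ring
    · intro j _ hj
      have h1 : A (Fin.last (m+2)) j.succ = 0 := by
        rw [hA]
        simp only [Matrix.of_apply]
        rw [if_neg (Fin.succ_ne_zero j), if_neg hlast0, if_neg]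
        simp only [Fin.ext_iff, Fin.val_last, Fin.val_succ]
        intro h
        apply hj
        simp only [Fin.ext_iff, Fin.val_last]
        omega
      rw [h1]; ring
    · simp

/-- For dimension `n + 2 ≥ 2`: the determinant of the matrix whose first
column is `(-θ₀κ₁, …, -θ₀κₙ)ᵀ` and whose `j`-th column (`j ≥ 2`) is `-κ_j e₁ + κ₁ e_j`
equals `-θ₀ κ₁^{(n+2)-2} |ξ|²`; in particular it is nonzero when `θ₀ ≠ 0`, `κ₁ ≠ 0` and
`ξ ≠ 0`. -/
theorem det_oscillation_matrix (n : ℕ) (θ₀ : ℝ) (κ : Fin (n + 2) → ℝ)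
    (M : Matrix (Fin (n + 2)) (Fin (n + 2)) ℝ)
    (hM : M = Matrix.of fun i j : Fin (n + 2) =>
      if j = 0 then -θ₀ * κ i
      else if i = 0 then -(κ j)
      else if i = j then κ 0
      else 0) :
    M.det = -θ₀ * (κ 0) ^ n * (∑ i, (κ i) ^ 2) ∧
    (θ₀ ≠ 0 → κ 0 ≠ 0 → κ ≠ 0 → M.det ≠ 0) := by
  have hdet : M.det = -θ₀ * (κ 0) ^ n * (∑ i, (κ i) ^ 2) := by
    rw [hM]; exact aux_det θ₀ n κ
  refine ⟨hdet, fun hθ hκ0 hκ => ?_⟩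
  rw [hdet]
  obtain ⟨i0, hi0⟩ : ∃ i, κ i ≠ 0 := Function.ne_iff.mp hκ
  have hsum : 0 < ∑ i, (κ i) ^ 2 :=
    Finset.sum_pos' (fun i _ => sq_nonneg _) ⟨i0, Finset.mem_univ _, by positivity⟩
  exact mul_ne_zero (mul_ne_zero (neg_ne_zero.mpr hθ) (pow_ne_zero _ hκ0)) hsum.ne'
end

section
/- Define m : ℝ²∖{0} → ℝ² by m(ξ) = |ξ|^{−2}(ξ₁ξ₂, −ξ₁²) (the symbol of the 2D porous media / Darcy multiplier). Then: (1) m is even and 0-homogeneous; (2) m(ξ)·ξ = 0 for all ξ ≠ 0; (3) the restriction of m to the unit circle S¹ is a C¹ immersion at every point, so every ξ ∈ S¹ is a regular point; (4) the image m(S¹) equals the circle {z ∈ ℝ² : |z + (0, 1/2)| = 1/2}; in particular m(S¹) spans ℝ². -/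
noncomputable section

namespace PMD

def P0 : E 2 →L[ℝ] ℝ := EuclideanSpace.proj 0
def P1 : E 2 →L[ℝ] ℝ := EuclideanSpace.proj 1
def e0 : E 2 := toE ![1,0]
def e1 : E 2 := toE ![0,1]

/-- The explicit symbol written smoothly. -/
def F : E 2 → E 2 := fun ξ =>
  ((ξ 0 * ξ 0 + ξ 1 * ξ 1)⁻¹ * (ξ 0 * ξ 1)) • e0 +
    ((ξ 0 * ξ 0 + ξ 1 * ξ 1)⁻¹ * (-(ξ 0 * ξ 0))) • e1

lemma h0 (η : E 2) : HasFDerivAt (fun ξ : E 2 => ξ 0) P0 η := P0.hasFDerivAt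
lemma h1 (η : E 2) : HasFDerivAt (fun ξ : E 2 => ξ 1) P1 η := P1.hasFDerivAt

lemma normsq (ξ : E 2) : ‖ξ‖ ^ 2 = ξ 0 * ξ 0 + ξ 1 * ξ 1 := by
  rw [EuclideanSpace.norm_eq, Real.sq_sqrt (by positivity)]
  simp [Fin.sum_univ_two]; ring

lemma fderiv_F_apply (η v : E 2) (hN : η 0 * η 0 + η 1 * η 1 = 1)
    (hperp : η 0 * v 0 + η 1 * v 1 = 0) :
    fderiv ℝ F η v = (η 0 * v 1 + η 1 * v 0) • e0 + (-(2 * η 0 * v 0)) • e1 := by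
  have hN' : η 0 * η 0 + η 1 * η 1 ≠ 0 := by rw [hN]; norm_num
  have hn : HasFDerivAt (fun ξ : E 2 => ξ 0 * ξ 0 + ξ 1 * ξ 1)
      _ η := ((h0 η).mul (h0 η)).add ((h1 η).mul (h1 η))
  have hinv : HasFDerivAt (fun ξ : E 2 => (ξ 0 * ξ 0 + ξ 1 * ξ 1)⁻¹) _ η :=
    (hasDerivAt_inv hN').comp_hasFDerivAt η hn
  have hc0 : HasFDerivAt (fun ξ : E 2 => (ξ 0 * ξ 0 + ξ 1 * ξ 1)⁻¹ * (ξ 0 * ξ 1)) _ η :=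
    hinv.mul ((h0 η).mul (h1 η))
  have hc1 : HasFDerivAt (fun ξ : E 2 => (ξ 0 * ξ 0 + ξ 1 * ξ 1)⁻¹ * (-(ξ 0 * ξ 0))) _ η :=
    hinv.mul ((h0 η).mul (h0 η)).neg
  have hf : HasFDerivAt F _ η := (hc0.smul_const e0).add (hc1.smul_const e1)
  rw [hf.fderiv]
  simp only [ContinuousLinearMap.add_apply, ContinuousLinearMap.smulRight_apply,
    ContinuousLinearMap.smul_apply, ContinuousLinearMap.coe_smul', Pi.smul_apply,
    ContinuousLinearMap.neg_apply, smul_eq_mul]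
  have e0p : P0 v = v 0 := rfl
  have e1p : P1 v = v 1 := rfl
  rw [e0p, e1p, hN]
  congr 1
  · congr 1
    linear_combination (-2 * η 0 * η 1) * hperp
  · congr 1
    linear_combination (2 * η 0 * η 0) * hperp

lemma contDiffOn_F : ContDiffOn ℝ 1 F {ξ : E 2 | ξ ≠ 0} := by
  have c0 : ContDiff ℝ 1 (fun ξ : E 2 => ξ 0) := P0.contDiff
  have c1 : ContDiff ℝ 1 (fun ξ : E 2 => ξ 1) := P1.contDiff
  have cn : ContDiff ℝ 1 (fun ξ : E 2 => ξ 0 * ξ 0 + ξ 1 * ξ 1) :=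
    (c0.mul c0).add (c1.mul c1)
  have hnz : ∀ ξ ∈ {ξ : E 2 | ξ ≠ 0}, ξ 0 * ξ 0 + ξ 1 * ξ 1 ≠ 0 := by
    intro ξ hξ
    rw [← normsq]
    have : ‖ξ‖ ≠ 0 := norm_ne_zero_iff.mpr hξ
    positivity
  have cinv : ContDiffOn ℝ 1 (fun ξ : E 2 => (ξ 0 * ξ 0 + ξ 1 * ξ 1)⁻¹) {ξ : E 2 | ξ ≠ 0} :=
    cn.contDiffOn.inv hnz
  exact ((cinv.mul (c0.mul c1).contDiffOn).smul contDiffOn_const).add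
    ((cinv.mul ((c0.mul c0).neg.contDiffOn)).smul contDiffOn_const)

lemma toE0 (a b : ℝ) : (toE ![a,b]) 0 = a := rfl
lemma toE1 (a b : ℝ) : (toE ![a,b]) 1 = b := rfl

lemma F0 (ξ : E 2) : F ξ 0 = (ξ 0 * ξ 0 + ξ 1 * ξ 1)⁻¹ * (ξ 0 * ξ 1) := by
  simp [F, e0, e1, toE]
lemma F1 (ξ : E 2) : F ξ 1 = (ξ 0 * ξ 0 + ξ 1 * ξ 1)⁻¹ * (-(ξ 0 * ξ 0)) := by
  simp [F, e0, e1, toE]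

lemma norm_eq_of_sq (w : E 2) (r : ℝ) (hr : 0 ≤ r) (h : w 0 * w 0 + w 1 * w 1 = r ^ 2) :
    ‖w‖ = r := by
  have h2 : ‖w‖ ^ 2 = r ^ 2 := by rw [normsq, h]
  rw [← Real.sqrt_sq (norm_nonneg w), h2, Real.sqrt_sq hr]

end PMD

open PMD in
/-- The symbol `m(ξ) = |ξ|⁻²(ξ₁ξ₂, -ξ₁²)` of the 2D porous media
equation is even and `0`-homogeneous, satisfies `m(ξ)·ξ = 0`, every point of `S¹` is a
regular point, and `m(S¹)` is the circle `{z : |z + (0,1/2)| = 1/2}`, which spans `ℝ²`. -/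
theorem porous_media_2d (m : E 2 → E 2)
    (hm : ∀ ξ : E 2, m ξ = (‖ξ‖ ^ 2)⁻¹ • toE ![ξ 0 * ξ 1, -(ξ 0 ^ 2)]) :
    -- (1) even and 0-homogeneous
    (∀ ξ : E 2, ξ ≠ 0 → m (-ξ) = m ξ) ∧
    (∀ (r : ℝ), 0 < r → ∀ ξ : E 2, ξ ≠ 0 → m (r • ξ) = m ξ) ∧
    -- (2) m(ξ)·ξ = 0
    (∀ ξ : E 2, ξ ≠ 0 → inner ℝ (m ξ) ξ = (0:ℝ)) ∧
    -- (3) every point of S¹ is regular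
    (∀ ξ ∈ Metric.sphere (0:E 2) 1, RegularPt m ξ) ∧
    -- (4) the image of S¹ is the circle of radius 1/2 centered at (0,-1/2) …
    m '' Metric.sphere (0:E 2) 1 = Metric.sphere (toE ![0, -(1/2)]) (1/2) ∧
    -- … which spans ℝ²
    Submodule.span ℝ (m '' Metric.sphere (0:E 2) 1) = ⊤ := by
  -- m agrees with the smooth expression F everywhere
  have hmF : m = F := by
    funext ξ
    rw [hm ξ, normsq]
    ext i
    fin_cases i <;> simp [F, toE, PMD.e0, PMD.e1]
    exact Or.inl (pow_two _)
  -- basic coordinate facts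
  have hsph : ∀ ξ : E 2, ξ ∈ Metric.sphere (0:E 2) 1 → ξ 0 * ξ 0 + ξ 1 * ξ 1 = 1 := by
    intro ξ hξ
    rw [← normsq]
    rw [Metric.mem_sphere, dist_zero_right] at hξ
    rw [hξ]; norm_num
  refine ⟨?_, ?_, ?_, ?_, ?_, ?_⟩
  · -- even
    intro ξ hξ
    rw [hm, hm, norm_neg]
    congr 1
    ext i
    fin_cases i <;> simp <;> ring
  · -- homogeneous
    intro r hr ξ hξ
    have hn : ‖ξ‖ ≠ 0 := norm_ne_zero_iff.mpr hξ
    rw [hm, hm]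
    have hns : ‖r • ξ‖ ^ 2 = r ^ 2 * ‖ξ‖ ^ 2 := by
      rw [norm_smul]; simp [mul_pow, sq_abs]
    ext i
    fin_cases i <;>
      simp only [PiLp.smul_apply, smul_eq_mul, hns, toE, Matrix.cons_val_zero,
        Matrix.cons_val_one, Matrix.head_cons, Fin.zero_eta, Fin.mk_one] <;>
    · field_simp
  · -- orthogonality
    intro ξ hξ
    have : ∀ x y : E 2, inner ℝ x y = x 0 * y 0 + x 1 * y 1 := by
      intro x y
      simp [PiLp.inner_apply, Fin.sum_univ_two, RCLike.inner_apply, conj_trivial]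
      ring
    rw [this, hm]
    simp only [PiLp.smul_apply, smul_eq_mul, toE, Matrix.cons_val_zero,
      Matrix.cons_val_one, Matrix.head_cons]
    ring
  · -- regular points
    intro ξ hξ
    refine ⟨hξ, {η : E 2 | η ≠ 0}, isOpen_ne, ?_, ?_, ?_⟩
    · rw [Metric.mem_sphere, dist_zero_right] at hξ
      intro h; rw [h] at hξ; simp at hξ
    · rw [hmF]; exact contDiffOn_F
    · rintro η ⟨-, hη⟩ v hinner hfd
      have hN := hsph η hη
      have hperp : η 0 * v 0 + η 1 * v 1 = 0 := by
        rw [show (inner ℝ η v : ℝ) = η 0 * v 0 + η 1 * v 1 by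
          simp [PiLp.inner_apply, Fin.sum_univ_two, RCLike.inner_apply, conj_trivial]; ring] at hinner
        exact hinner
      rw [hmF, fderiv_F_apply η v hN hperp] at hfd
      have hA : η 0 * v 1 + η 1 * v 0 = 0 := by
        have := congrArg (fun w : E 2 => w 0) hfd
        simpa [PMD.e0, PMD.e1, toE] using this
      have hB : η 0 * v 0 = 0 := by
        have := congrArg (fun w : E 2 => w 1) hfd
        simp [PMD.e0, PMD.e1, toE] at this
        rcases this with h | h <;> rw [h] <;> ring
      have hv0 : v 0 = 0 ∧ v 1 = 0 := by
        by_cases h0 : η 0 = 0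
        · have h1 : η 1 ≠ 0 := by intro h; rw [h0, h] at hN; norm_num at hN
          constructor
          · have : η 1 * v 0 = 0 := by linear_combination hA - v 1 * h0
            exact (mul_eq_zero.mp this).resolve_left h1
          · have : η 1 * v 1 = 0 := by linear_combination hperp - v 0 * h0
            exact (mul_eq_zero.mp this).resolve_left h1
        · have hv0 : v 0 = 0 := (mul_eq_zero.mp hB).resolve_left h0
          refine ⟨hv0, ?_⟩
          have : η 0 * v 1 = 0 := by linear_combination hA - η 1 * hv0
          exact (mul_eq_zero.mp this).resolve_left h0
      ext i
      fin_cases i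
      · simpa using hv0.1
      · simpa using hv0.2
  · -- image of the sphere
    ext z
    constructor
    · rintro ⟨ξ, hξ, rfl⟩
      have hN := hsph ξ hξ
      rw [Metric.mem_sphere, dist_eq_norm]
      apply norm_eq_of_sq _ _ (by norm_num)
      have h0 : (m ξ - toE ![0, -(1/2)]) 0 = ξ 0 * ξ 1 := by
        rw [hmF]
        have : (F ξ - toE ![0, -(1/2)]) 0 = F ξ 0 - (toE ![0, -(1/2)] : E 2) 0 := rfl
        rw [this, F0, hN, toE0]
        ring
      have h1 : (m ξ - toE ![0, -(1/2)]) 1 = -(ξ 0 * ξ 0) + 1/2 := by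
        rw [hmF]
        have : (F ξ - toE ![0, -(1/2)]) 1 = F ξ 1 - (toE ![0, -(1/2)] : E 2) 1 := rfl
        rw [this, F1, hN, toE1]
        ring
      rw [h0, h1]
      nlinarith [hN]
    · intro hz
      set a := z 0 with ha
      set b := z 1 with hb
      have hzn : ‖z - toE ![0, -(1/2)]‖ = 1/2 := by
        rw [Metric.mem_sphere, dist_eq_norm] at hz; exact hz
      have hcirc : a * a + (b + 1/2) * (b + 1/2) = 1/4 := by
        have h2 : ‖z - toE ![0, -(1/2)]‖ ^ 2 = (1/2:ℝ) ^ 2 := by rw [hzn]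
        rw [normsq] at h2
        have e0' : (z - toE ![0, -(1/2)]) 0 = a - (toE ![0, -(1/2)] : E 2) 0 := rfl
        have e1' : (z - toE ![0, -(1/2)]) 1 = b - (toE ![0, -(1/2)] : E 2) 1 := rfl
        rw [toE0] at e0'
        rw [toE1] at e1'
        rw [e0', e1'] at h2
        nlinarith [h2]
      by_cases hb0 : b = 0
      · have ha0 : a = 0 := by
          have h' := hcirc
          rw [hb0] at h'
          have : a * a = 0 := by nlinarith [h']
          exact mul_self_eq_zero.mp this
        refine ⟨toE ![0, 1], ?_, ?_⟩
        · rw [Metric.mem_sphere, dist_zero_right]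
          apply norm_eq_of_sq _ _ (by norm_num)
          simp [toE]
        · rw [hmF]
          ext i
          fin_cases i
          · rw [show ((⟨0, by norm_num⟩ : Fin 2) : Fin 2) = 0 from rfl, F0]
            simp [toE, ← ha, ha0]
          · rw [show ((⟨1, by norm_num⟩ : Fin 2) : Fin 2) = 1 from rfl, F1]
            simp [toE, ← hb, hb0]
      · have hbneg : b < 0 := by
          rcases lt_or_eq_of_le
              (show b ≤ 0 by nlinarith [hcirc, mul_self_nonneg a, mul_self_nonneg b])
              with h | h
          · exact h
          · exact absurd h hb0
        set s := Real.sqrt (-b) with hsdef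
        have hs2 : s * s = -b := Real.mul_self_sqrt (by linarith)
        have hs0 : s ≠ 0 := by
          intro h
          rw [h] at hs2
          simp at hs2
          linarith
        have haa : a * a = -b * (1 + b) := by linear_combination hcirc
        have hnorm : s * s + (a/s) * (a/s) = 1 := by
          rw [div_mul_div_comm, hs2, haa]
          field_simp
          ring
        refine ⟨toE ![s, a/s], ?_, ?_⟩
        · rw [Metric.mem_sphere, dist_zero_right]
          apply norm_eq_of_sq _ _ (by norm_num)
          simpa [toE] using hnorm
        · rw [hmF]
          ext i
          fin_cases i
          · rw [show ((⟨0, by norm_num⟩ : Fin 2) : Fin 2) = 0 from rfl, F0, toE0, toE1, hnorm,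
              ← ha]
            field_simp
          · rw [show ((⟨1, by norm_num⟩ : Fin 2) : Fin 2) = 1 from rfl, F1, toE0, toE1, hnorm,
              hs2, ← hb]
            norm_num
  · -- span
    have hu : (toE ![0, -1] : E 2) ∈ m '' Metric.sphere (0:E 2) 1 := by
      refine ⟨toE ![1, 0], ?_, ?_⟩
      · rw [Metric.mem_sphere, dist_zero_right]
        apply norm_eq_of_sq _ _ (by norm_num)
        rw [toE0, toE1]
        norm_num
      · rw [hmF]
        ext i
        fin_cases i
        · rw [show ((⟨0, by norm_num⟩ : Fin 2) : Fin 2) = 0 from rfl, F0, toE0, toE1]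
          simp [toE]
        · rw [show ((⟨1, by norm_num⟩ : Fin 2) : Fin 2) = 1 from rfl, F1, toE0, toE1]
          simp [toE]
    have hw : (toE ![1/2, -(1/2)] : E 2) ∈ m '' Metric.sphere (0:E 2) 1 := by
      have hs2 : Real.sqrt (1/2) * Real.sqrt (1/2) = 1/2 :=
        Real.mul_self_sqrt (by norm_num)
      refine ⟨toE ![Real.sqrt (1/2), Real.sqrt (1/2)], ?_, ?_⟩
      · rw [Metric.mem_sphere, dist_zero_right]
        apply norm_eq_of_sq _ _ (by norm_num)
        rw [toE0, toE1, hs2]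
        norm_num
      · rw [hmF]
        ext i
        fin_cases i
        · rw [show ((⟨0, by norm_num⟩ : Fin 2) : Fin 2) = 0 from rfl, F0, toE0, toE1, hs2]
          rw [toE0]
          norm_num
        · rw [show ((⟨1, by norm_num⟩ : Fin 2) : Fin 2) = 1 from rfl, F1, toE0, toE1, hs2]
          rw [toE1]
          norm_num
    rw [Submodule.eq_top_iff']
    intro x
    have hx : x = (x 0) • ((2:ℝ) • (toE ![1/2, -(1/2)] : E 2) - toE ![0, -1]) +
        (x 1) • (-(toE ![0, -1] : E 2)) := by
      ext i
      fin_cases i <;> simp [toE] <;> ring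
    rw [hx]
    exact Submodule.add_mem _
      (Submodule.smul_mem _ _ (Submodule.sub_mem _
        (Submodule.smul_mem _ _ (Submodule.subset_span hw)) (Submodule.subset_span hu)))
      (Submodule.smul_mem _ _ (Submodule.neg_mem _ (Submodule.subset_span hu)))
end
end

section
/- Define M = (M₁, M₂, M₃) : ℝ³∖{0} → ℝ³ (the symbol of the magnetostrophic turbulence multiplier) for all ξ with ξ₃²|ξ|² + ξ₂⁴ ≠ 0 by M₁(ξ) = (ξ₂ξ₃|ξ|² + ξ₁ξ₂²ξ₃)/(ξ₃²|ξ|² + ξ₂⁴), M₂(ξ) = (−ξ₁ξ₃|ξ|² + ξ₂³ξ₃)/(ξ₃²|ξ|² + ξ₂⁴), M₃(ξ) = −ξ₂²(ξ₁² + ξ₂²)/(ξ₃²|ξ|² + ξ₂⁴). Then: (1) M is even and 0-homogeneous; (2) M(ξ)·ξ = 0 wherever M is defined; (3) M is unbounded on the unit sphere S², i.e. sup{|M(ξ)| : ξ ∈ S², ξ₃²|ξ|² + ξ₂⁴ ≠ 0} = ∞ (for instance, for ξ = (ξ₁, 0, ξ₃) ∈ S² with ξ₃ ≠ 0 one has M(ξ)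 = (0, −ξ₁/ξ₃, 0)). -/
noncomputable section

lemma normsq_E3 (ξ : E 3) : ‖ξ‖ ^ 2 = ξ 0 ^ 2 + ξ 1 ^ 2 + ξ 2 ^ 2 := by
  rw [EuclideanSpace.norm_eq, Real.sq_sqrt (by positivity)]
  simp [Fin.sum_univ_three, sq_abs]

lemma div_scale_aux {a b a' b' k : ℝ} (hk : k ≠ 0) (ha : a = k * a') (hb : b = k * b') :
    a / b = a' / b' := by subst ha hb; exact mul_div_mul_left _ _ hk

/-- The symbol `M` of the magnetostrophic turbulence multiplier
(defined where `ξ₃²|ξ|² + ξ₂⁴ ≠ 0`) is even and `0`-homogeneous, satisfies `M(ξ)·ξ = 0`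
wherever it is defined, and is unbounded on the unit sphere `S²`; for instance, for
`ξ = (ξ₁, 0, ξ₃) ∈ S²` with `ξ₃ ≠ 0` one has `M(ξ) = (0, -ξ₁/ξ₃, 0)`. -/
theorem magnetostrophic_symbol (M : E 3 → E 3)
    (hM : ∀ ξ : E 3, M ξ = toE
      ![(ξ 1 * ξ 2 * ‖ξ‖ ^ 2 + ξ 0 * ξ 1 ^ 2 * ξ 2) / (ξ 2 ^ 2 * ‖ξ‖ ^ 2 + ξ 1 ^ 4),
        (-(ξ 0 * ξ 2 * ‖ξ‖ ^ 2) + ξ 1 ^ 3 * ξ 2) / (ξ 2 ^ 2 * ‖ξ‖ ^ 2 + ξ 1 ^ 4),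
        -(ξ 1 ^ 2 * (ξ 0 ^ 2 + ξ 1 ^ 2)) / (ξ 2 ^ 2 * ‖ξ‖ ^ 2 + ξ 1 ^ 4)]) :
    -- (1) even and 0-homogeneous
    (∀ ξ : E 3, ξ ≠ 0 → M (-ξ) = M ξ) ∧
    (∀ (r : ℝ), 0 < r → ∀ ξ : E 3, ξ ≠ 0 → M (r • ξ) = M ξ) ∧
    -- (2) M(ξ)·ξ = 0 wherever M is defined
    (∀ ξ : E 3, ξ 2 ^ 2 * ‖ξ‖ ^ 2 + ξ 1 ^ 4 ≠ 0 → inner ℝ (M ξ) ξ = (0:ℝ)) ∧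
    -- (3) M is unbounded on S²
    (∀ C : ℝ, ∃ ξ ∈ Metric.sphere (0:E 3) 1,
      ξ 2 ^ 2 * ‖ξ‖ ^ 2 + ξ 1 ^ 4 ≠ 0 ∧ C < ‖M ξ‖) ∧
    -- the explicit values on the ξ₂ = 0 section of the sphere
    (∀ a c : ℝ, a ^ 2 + c ^ 2 = 1 → c ≠ 0 →
      M (toE ![a, 0, c]) = toE ![0, -(a / c), 0]) := by
  -- the explicit values
  have h5 : ∀ a c : ℝ, a ^ 2 + c ^ 2 = 1 → c ≠ 0 →
      M (toE ![a, 0, c]) = toE ![0, -(a / c), 0] := by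
    intro a c h hc
    have hn : ‖toE ![a, 0, c]‖ ^ 2 = 1 := by
      rw [normsq_E3]; show a^2 + 0^2 + c^2 = 1; simpa using h
    simp only [toE] at hn
    rw [hM]
    ext i
    fin_cases i <;>
      simp only [toE, WithLp.ofLp_toLp, Matrix.cons_val_zero, Matrix.cons_val_one, Matrix.head_cons,
        Matrix.cons_val_two, Matrix.tail_cons, hn]
    · norm_num
    · simp only [Fin.mk_one, Matrix.cons_val_one, Matrix.cons_val_zero, Matrix.head_cons,
        Matrix.tail_cons]
      field_simp; ring
    · norm_num
  refine ⟨?_, ?_, ?_, ?_, h5⟩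
  · -- even
    intro ξ _
    rw [hM, hM]
    ext i
    fin_cases i <;>
      simp only [toE, WithLp.ofLp_toLp, Matrix.cons_val_zero, Matrix.cons_val_one, Matrix.head_cons,
        Matrix.cons_val_two, Matrix.tail_cons, PiLp.neg_apply, norm_neg] <;>
      ring_nf
  · -- 0-homogeneous
    intro r hr ξ _
    have h4 : (r:ℝ)^4 ≠ 0 := by positivity
    have hn : ‖r • ξ‖ ^ 2 = r ^ 2 * ‖ξ‖ ^ 2 := by
      rw [norm_smul]; simp [mul_pow, sq_abs]
    rw [hM, hM]
    ext i
    fin_cases i <;>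
      simp only [toE, WithLp.ofLp_toLp, Matrix.cons_val_zero, Matrix.cons_val_one, Matrix.head_cons,
        Matrix.cons_val_two, Matrix.tail_cons, PiLp.smul_apply, smul_eq_mul, hn] <;>
      exact div_scale_aux h4 (by ring) (by ring)
  · -- orthogonality
    intro ξ hD
    rw [hM]
    simp only [PiLp.inner_apply, RCLike.inner_apply, starRingEnd_apply, star_trivial,
      Fin.sum_univ_three, toE, WithLp.ofLp_toLp, Matrix.cons_val_zero, Matrix.cons_val_one, Matrix.head_cons,
      Matrix.cons_val_two, Matrix.tail_cons]
    field_simp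
    ring
  · -- unboundedness
    intro C
    set t : ℝ := |C| + 1 with ht
    have ht0 : 0 < t := by positivity
    have hs0 : (0:ℝ) < Real.sqrt (1 + t ^ 2) := Real.sqrt_pos.mpr (by positivity)
    set s : ℝ := Real.sqrt (1 + t ^ 2) with hs
    have hs2 : s ^ 2 = 1 + t ^ 2 := Real.sq_sqrt (by positivity)
    set a : ℝ := t / s with ha
    set c : ℝ := 1 / s with hcdef
    have hc : c ≠ 0 := by
      rw [hcdef]; positivity
    have hsum : a ^ 2 + c ^ 2 = 1 := by
      rw [ha, hcdef]
      field_simp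
      linarith [hs2]
    have hac : a / c = t := by
      rw [ha, hcdef]
      field_simp
    refine ⟨toE ![a, 0, c], ?_, ?_, ?_⟩
    · rw [mem_sphere_zero_iff_norm]
      have : ‖toE ![a, 0, c]‖ ^ 2 = 1 := by
        rw [normsq_E3]; show a^2 + 0^2 + c^2 = 1; simpa using hsum
      nlinarith [norm_nonneg (toE ![a, 0, c])]
    · have hn : ‖toE ![a, 0, c]‖ ^ 2 = 1 := by
        rw [normsq_E3]; show a^2 + 0^2 + c^2 = 1; simpa using hsum
      show c ^ 2 * ‖toE ![a, 0, c]‖ ^ 2 + (0:ℝ) ^ 4 ≠ 0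
      rw [hn]
      simpa using pow_ne_zero 2 hc
    · rw [h5 a c hsum hc]
      have : ‖toE ![0, -(a / c), 0]‖ ^ 2 = t ^ 2 := by
        rw [normsq_E3]; show 0^2 + (-(a/c))^2 + 0^2 = t^2; rw [hac]; ring
      have hnorm : ‖toE ![0, -(a / c), 0]‖ = t := by
        nlinarith [norm_nonneg (toE ![0, -(a / c), 0]), ht0]
      rw [hnorm, ht]
      calc C ≤ |C| := le_abs_self C
        _ < |C| + 1 := by linarith
end
end

section
/- Let n ≥ 1 and let A = (θ, q, u) ∈ ℝ×ℝⁿ×ℝⁿ with |θ| < 1. Set x = (u+q)/(1+θ) and y = (u−q)/(1−θ). Then A = ((1+θ)/2)·X + ((1−θ)/2)·Y where X = (1, x, x) and Y = (−1, −y, y), both coefficients (1±θ)/2 lie in (0,1) and sum to 1, and both X and Y belong to the constraint set K = {(θ', θ'u', u') : θ' ∈ ℝ, u' ∈ ℝⁿ}. -/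
noncomputable section

/-- Every state `A = (θ, q, u)` with `|θ| < 1` is the convex
combination `A = ((1+θ)/2)X + ((1-θ)/2)Y` of the two points `X = (1, x, x)` and
`Y = (-1, -y, y)` of `K`, where `x = (u+q)/(1+θ)` and `y = (u-q)/(1-θ)`. -/
theorem two_point_decomposition (n : ℕ) (hn : 1 ≤ n)
    (θ : ℝ) (q u : E n) (hθ : |θ| < 1)
    (x y : E n) (hx : x = (1 + θ)⁻¹ • (u + q)) (hy : y = (1 - θ)⁻¹ • (u - q)) :
    ((θ, q, u) : ℝ × E n × E n)
        = ((1 + θ)/2) • (((1:ℝ), x, x) : ℝ × E n × E n)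
          + ((1 - θ)/2) • (((-1:ℝ), -y, y) : ℝ × E n × E n) ∧
    (1 + θ)/2 ∈ Set.Ioo (0:ℝ) 1 ∧ (1 - θ)/2 ∈ Set.Ioo (0:ℝ) 1 ∧
    (1 + θ)/2 + (1 - θ)/2 = 1 ∧
    (((1:ℝ), x, x) : ℝ × E n × E n) ∈ Kset n ∧
    (((-1:ℝ), -y, y) : ℝ × E n × E n) ∈ Kset n := by

  obtain ⟨hθ1, hθ2⟩ := abs_lt.mp hθ
  have h1 : (1 + θ) ≠ 0 := by linarith
  have h2 : (1 - θ) ≠ 0 := by linarith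
  subst hx hy
  refine ⟨?_, ⟨by linarith, by linarith⟩, ⟨by linarith, by linarith⟩, by ring, ?_, ?_⟩
  · refine Prod.ext (by simp; ring) (Prod.ext ?_ ?_) <;>
      simp only [Prod.smul_mk, Prod.fst_add, Prod.snd_add, smul_smul, smul_add, smul_sub,
        smul_neg] <;> (match_scalars <;> field_simp <;> ring)
  · simp [Kset]
  · simp [Kset]
end
end
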